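/- arXiv:q-alg/9703001 — 4 statements merged into one kernel-verified Lean document; each statement's English description precedes it below -/
import Mathlib

section
/- Let k be a commutative ring, R a k-algebra, 𝓑 an abelian k-linear category, and H : ModuleCat R ⥤ 𝓑 a k-linear functor preserving all colimits. Then the k-algebra homomorphism from the algebra of natural endomorphisms of H to End_𝓑(H(R)), given by specializing a natural endomorphism at the object R (the free module of rank one), is injective, and its image equals the centralizer in End_𝓑(H(R)) of the image of the algebra map End_R(R) → End_𝓑(H(R)) induced by H on endomorphisms. -/
open CategoryTheory

noncomputable section

universe v u w w₂

variable (k : Type u) [CommRing k] (R : Type v) [Ring R] [Algebra k R]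

instance moduleCatModuleK (M : ModuleCat.{v} R) : Module k M :=
  RestrictScalars.module k R M

instance moduleCatIsScalarTowerK (M : ModuleCat.{v} R) : IsScalarTower k R M :=
  RestrictScalars.isScalarTower k R M

/-- The category of `R`-modules is `k`-linear when `R` is a `k`-algebra. -/
instance moduleCatLinearK : CategoryTheory.Linear k (ModuleCat.{v} R) where
  homModule _ _ := ModuleCat.Hom.instModule
  smul_comp := by
    intros
    ext
    dsimp only [ModuleCat.hom_comp, ModuleCat.hom_smul, LinearMap.comp_apply]
    rw [LinearMap.smul_apply, LinearMap.map_smul_of_tower]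
    rfl


namespace FunctorEndAux
open CategoryTheory Limits

variable {R : Type v} [Ring R] {B : Type w} [Category.{w₂} B] [Abelian B]
variable (H : ModuleCat.{v} R ⥤ B) [H.Additive] [PreservesColimitsOfSize.{w₂,w₂} H]

@[simp] lemma mcomp_apply {M N P : ModuleCat.{v} R} (f : M ⟶ N) (g : N ⟶ P) (x : M) :
    (f ≫ g) x = g (f x) := rfl

abbrev sl (ι : Type v) (i : ι) : ModuleCat.of R R ⟶ ModuleCat.of R (ι →₀ R) :=
  ModuleCat.ofHom (Finsupp.lsingle i)

def freeCofan (R : Type v) [Ring R] (ι : Type v) : Cofan (fun _ : ι => ModuleCat.of R R) :=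
  Cofan.mk (ModuleCat.of R (ι →₀ R)) fun i => sl ι i

def freeIsColimit (R : Type v) [Ring R] (ι : Type v) : IsColimit (freeCofan R ι) :=
  mkCofanColimit _
    (fun t => ModuleCat.ofHom (Finsupp.linearCombination R (fun i => t.inj i (1 : R))))
    (fun t i => by
      apply ModuleCat.hom_ext
      apply LinearMap.ext_ring
      show Finsupp.linearCombination R (fun i => t.inj i (1 : R)) (Finsupp.single i (1 : R))
        = t.inj i (1 : R)
      rw [Finsupp.linearCombination_single, one_smul])
    (fun t m hm => by
      beta_reduce
      apply ModuleCat.hom_ext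
      apply Finsupp.lhom_ext (φ := m.hom)
      intro a b
      have h2 : m (Finsupp.single a b) = t.inj a b := ConcreteCategory.congr_hom (hm a) b
      refine h2.trans ?_
      show t.inj a b = Finsupp.linearCombination R (fun i => t.inj i (1 : R)) (Finsupp.single a b)
      rw [Finsupp.linearCombination_single, ← map_smul, smul_eq_mul, mul_one])

variable {H}

def mapFreeIsColimit (ι : Type v) [Small.{w₂} ι] :
    IsColimit (H.mapCocone (freeCofan R ι)) :=
  haveI : PreservesColimitsOfShape (Discrete ι) H :=
    preservesColimitsOfShape_of_equiv (Discrete.equivalence (equivShrink ι).symm) H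
  isColimitOfPreserves H (freeIsColimit R ι)

lemma free_hom_ext (ι : Type v) [Small.{w₂} ι] {X : B}
    {u v : H.obj (ModuleCat.of R (ι →₀ R)) ⟶ X}
    (h : ∀ i : ι, H.map (sl ι i) ≫ u = H.map (sl ι i) ≫ v) : u = v := by
  apply (mapFreeIsColimit (H := H) ι).hom_ext
  rintro ⟨i⟩
  exact h i

section e
variable (e : End (H.obj (ModuleCat.of R R)))

def eCocone (ι : Type v) :
    Cocone ((Discrete.functor fun _ : ι => ModuleCat.of R R) ⋙ H) where
  pt := H.obj (ModuleCat.of R (ι →₀ R))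
  ι := { app := fun i => e ≫ H.map (sl ι i.as)
         naturality := by
           rintro ⟨i⟩ ⟨j⟩ ⟨⟨(rfl : i = j)⟩⟩
           simp }

def eFree (ι : Type v) [Small.{w₂} ι] : End (H.obj (ModuleCat.of R (ι →₀ R))) :=
  (mapFreeIsColimit (H := H) ι).desc (eCocone e ι)

lemma eFree_fac (ι : Type v) [Small.{w₂} ι] (i : ι) :
    H.map (sl ι i) ≫ eFree e ι = e ≫ H.map (sl ι i) :=
  (mapFreeIsColimit (H := H) ι).fac (eCocone e ι) ⟨i⟩

lemma map_from_R_comm (hcent : ∀ s : End (ModuleCat.of R R), H.map s ≫ e = e ≫ H.map s)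
    (ι : Type v) [Small.{w₂} ι]
    (g : ModuleCat.of R R ⟶ ModuleCat.of R (ι →₀ R)) :
    H.map g ≫ eFree e ι = e ≫ H.map g := by
  set y : ι →₀ R := g.hom (1 : R) with hy
  have hg : g = ∑ i ∈ y.support,
      (ModuleCat.ofHom (LinearMap.toSpanSingleton R R (y i)) ≫ sl ι i) := by
    apply ModuleCat.hom_ext
    apply LinearMap.ext_ring
    show y = (∑ i ∈ y.support,
      ((ModuleCat.ofHom (LinearMap.toSpanSingleton R R (y i)) ≫ sl ι i))).hom (1 : R)
    rw [ModuleCat.hom_sum, LinearMap.sum_apply]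
    have h2 : ∀ i ∈ y.support,
        ((ModuleCat.ofHom (LinearMap.toSpanSingleton R R (y i)) ≫ sl ι i)).hom (1 : R)
          = Finsupp.single i (y i) := by
      intro i _
      show Finsupp.single i ((LinearMap.toSpanSingleton R R (y i)) (1 : R)) = _
      rw [LinearMap.toSpanSingleton_apply, one_smul]
    rw [Finset.sum_congr rfl h2]
    exact (Finsupp.sum_single y).symm
  rw [hg, H.map_sum, Preadditive.sum_comp, Preadditive.comp_sum]
  refine Finset.sum_congr rfl fun i _ => ?_
  rw [H.map_comp, Category.assoc, eFree_fac, ← Category.assoc,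
    hcent (ModuleCat.ofHom (LinearMap.toSpanSingleton R R (y i))), Category.assoc]

lemma map_free_comm (hcent : ∀ s : End (ModuleCat.of R R), H.map s ≫ e = e ≫ H.map s)
    (ι κ : Type v) [Small.{w₂} ι] [Small.{w₂} κ]
    (g : ModuleCat.of R (ι →₀ R) ⟶ ModuleCat.of R (κ →₀ R)) :
    H.map g ≫ eFree e κ = eFree e ι ≫ H.map g := by
  apply free_hom_ext ι
  intro i
  rw [← Category.assoc, ← H.map_comp, map_from_R_comm e hcent κ (sl ι i ≫ g),
    ← Category.assoc, eFree_fac, Category.assoc, H.map_comp]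

end e

section pres
variable (M : ModuleCat.{v} R)

/-- the canonical projection from the free module on the underlying type of `M`. -/
def πM : ModuleCat.of R ((↥M) →₀ R) ⟶ M :=
  ModuleCat.ofHom (Finsupp.linearCombination R (_root_.id : ↥M → ↥M))

/-- index type for relations -/
abbrev KM : Type v := ↥(LinearMap.ker (Finsupp.linearCombination R (_root_.id : ↥M → ↥M)))

def dM : ModuleCat.of R ((KM M) →₀ R) ⟶ ModuleCat.of R ((↥M) →₀ R) :=
  ModuleCat.ofHom (Finsupp.linearCombination R (fun x : KM M => (x : (↥M) →₀ R)))

lemma dM_comp_πM : dM M ≫ πM M = 0 := by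
  have hr : ∀ x : (KM M) →₀ R, (πM M) ((dM M) x) = 0 := by
    intro x
    have h1 : (dM M) x ∈ LinearMap.range (Finsupp.linearCombination R
        (fun x : KM M => (x : (↥M) →₀ R))) := ⟨x, rfl⟩
    have h2 : LinearMap.range (Finsupp.linearCombination R
        (fun x : KM M => (x : (↥M) →₀ R)))
        ≤ LinearMap.ker (Finsupp.linearCombination R (_root_.id : ↥M → ↥M)) := by
      rw [Finsupp.range_linearCombination]
      rw [Submodule.span_le]
      rintro z ⟨⟨k, hk⟩, rfl⟩
      exact hk
    exact h2 h1
  apply ModuleCat.hom_ext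
  apply LinearMap.ext
  intro x
  exact hr x

def presSC : ShortComplex (ModuleCat.{v} R) := ⟨dM M, πM M, dM_comp_πM M⟩

lemma presSC_exact : (presSC M).Exact := by
  rw [ShortComplex.moduleCat_exact_iff_range_eq_ker]
  show LinearMap.range (Finsupp.linearCombination R (fun x : KM M => (x : (↥M) →₀ R)))
    = LinearMap.ker (Finsupp.linearCombination R (_root_.id : ↥M → ↥M))
  rw [Finsupp.range_linearCombination]
  apply le_antisymm
  · rw [Submodule.span_le]
    rintro z ⟨⟨k, hk⟩, rfl⟩
    exact hk
  · intro z hz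
    exact Submodule.subset_span ⟨(⟨z, hz⟩ : KM M), rfl⟩

instance : Epi (πM M) := by
  rw [ModuleCat.epi_iff_surjective]
  exact Finsupp.linearCombination_surjective R Function.surjective_id

/-- `πM M` is a cokernel of `dM M`. -/
def presIsCokernel : IsColimit (CokernelCofork.ofπ (πM M) (dM_comp_πM M)) :=
  haveI : Epi (presSC M).g := inferInstanceAs (Epi (πM M))
  (presSC_exact M).gIsCokernel

/-- `H` maps it to a cokernel. -/
def mapPresIsCokernel :
    IsColimit (CokernelCofork.ofπ (H.map (πM M))
      ((CokernelCofork.ofπ (πM M) (dM_comp_πM M)).map_condition H)) := by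
  haveI : PreservesColimitsOfSize.{0,0} H := preservesColimitsOfSize_shrink.{0,w₂,0,w₂} H
  exact CokernelCofork.mapIsColimit _ (presIsCokernel M) H

end pres

section build
variable (e : End (H.obj (ModuleCat.of R R)))
  (hcent : ∀ s : End (ModuleCat.of R R), H.map s ≫ e = e ≫ H.map s)
  (hsm : ∀ α : Type v, Small.{w₂} α)

def eApp (M : ModuleCat.{v} R) : End (H.obj M) :=
  haveI := hsm (↥M); haveI := hsm (KM M)
  Cofork.IsColimit.desc (mapPresIsCokernel M)
    (eFree e (↥M) ≫ H.map (πM M)) (by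
      haveI := hsm (↥M); haveI := hsm (KM M)
      rw [zero_comp, ← Category.assoc, map_free_comm e hcent (KM M) (↥M) (dM M),
        Category.assoc, ← H.map_comp, dM_comp_πM, H.map_zero, comp_zero])

lemma eApp_fac (M : ModuleCat.{v} R) :
    haveI := hsm (↥M)
    H.map (πM M) ≫ eApp e hcent hsm M = eFree e (↥M) ≫ H.map (πM M) := by
  haveI := hsm (↥M); haveI := hsm (KM M)
  exact Cofork.IsColimit.π_desc' (mapPresIsCokernel M) _ _

def fbar {M N : ModuleCat.{v} R} (f : M ⟶ N) :
    ModuleCat.of R ((↥M) →₀ R) ⟶ ModuleCat.of R ((↥N) →₀ R) :=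
  ModuleCat.ofHom (Finsupp.lmapDomain R R f)

lemma fbar_comm {M N : ModuleCat.{v} R} (f : M ⟶ N) : fbar f ≫ πM N = πM M ≫ f := by
  apply ModuleCat.hom_ext
  apply Finsupp.lhom_ext
  intro a b
  show (πM N) (Finsupp.mapDomain f (Finsupp.single a b)) = f ((πM M) (Finsupp.single a b))
  rw [Finsupp.mapDomain_single]
  show Finsupp.linearCombination R _root_.id (Finsupp.single (f a) b)
      = f (Finsupp.linearCombination R _root_.id (Finsupp.single a b))
  rw [Finsupp.linearCombination_single, Finsupp.linearCombination_single, map_smul]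
  rfl

lemma eApp_natural {M N : ModuleCat.{v} R} (f : M ⟶ N) :
    H.map f ≫ eApp e hcent hsm N = eApp e hcent hsm M ≫ H.map f := by
  haveI := hsm (↥M); haveI := hsm (KM M); haveI := hsm (↥N); haveI := hsm (KM N)
  apply Cofork.IsColimit.hom_ext (mapPresIsCokernel M)
  show H.map (πM M) ≫ H.map f ≫ eApp e hcent hsm N
      = H.map (πM M) ≫ eApp e hcent hsm M ≫ H.map f
  calc H.map (πM M) ≫ H.map f ≫ eApp e hcent hsm N
      = H.map (πM M ≫ f) ≫ eApp e hcent hsm N := by rw [H.map_comp, Category.assoc]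
    _ = H.map (fbar f ≫ πM N) ≫ eApp e hcent hsm N := by rw [fbar_comm]
    _ = H.map (fbar f) ≫ H.map (πM N) ≫ eApp e hcent hsm N := by
        rw [H.map_comp, Category.assoc]
    _ = H.map (fbar f) ≫ eFree e (↥N) ≫ H.map (πM N) := by rw [eApp_fac]
    _ = (H.map (fbar f) ≫ eFree e (↥N)) ≫ H.map (πM N) := by rw [Category.assoc]
    _ = (eFree e (↥M) ≫ H.map (fbar f)) ≫ H.map (πM N) := by
        rw [map_free_comm e hcent (↥M) (↥N) (fbar f)]
    _ = eFree e (↥M) ≫ H.map (fbar f ≫ πM N) := by rw [Category.assoc, H.map_comp]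
    _ = eFree e (↥M) ≫ H.map (πM M ≫ f) := by rw [fbar_comm]
    _ = (eFree e (↥M) ≫ H.map (πM M)) ≫ H.map f := by rw [H.map_comp, Category.assoc]
    _ = (H.map (πM M) ≫ eApp e hcent hsm M) ≫ H.map f := by rw [eApp_fac]
    _ = H.map (πM M) ≫ eApp e hcent hsm M ≫ H.map f := by rw [Category.assoc]

def eNat : H ⟶ H where
  app M := eApp e hcent hsm M
  naturality _ _ f := eApp_natural e hcent hsm f

def oneR (R : Type v) [Ring R] : ↥(ModuleCat.of R R) := (1 : R)

def incl1 : ModuleCat.of R R ⟶ ModuleCat.of R ((↥(ModuleCat.of R R)) →₀ R) :=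
  sl (↥(ModuleCat.of R R)) (oneR R)

lemma incl1_comp_πM : incl1 (R := R) ≫ πM (ModuleCat.of R R) = 𝟙 (ModuleCat.of R R) := by
  apply ModuleCat.hom_ext
  apply LinearMap.ext_ring
  show (πM (ModuleCat.of R R)) (Finsupp.single _ (1 : R)) = (1 : R)
  show Finsupp.linearCombination R _root_.id (Finsupp.single _ (1 : R)) = (1 : R)
  rw [Finsupp.linearCombination_single, one_smul]
  rfl

lemma eNat_app_R : (eNat e hcent hsm).app (ModuleCat.of R R) = e := by
  haveI := hsm (↥(ModuleCat.of R R))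
  show eApp e hcent hsm (ModuleCat.of R R) = e
  have h1 := eApp_fac e hcent hsm (ModuleCat.of R R)
  calc eApp e hcent hsm (ModuleCat.of R R)
      = 𝟙 _ ≫ eApp e hcent hsm (ModuleCat.of R R) := (Category.id_comp _).symm
    _ = H.map (𝟙 _) ≫ eApp e hcent hsm (ModuleCat.of R R) := by rw [H.map_id]
    _ = H.map (incl1 ≫ πM (ModuleCat.of R R)) ≫ eApp e hcent hsm (ModuleCat.of R R) := by
        rw [incl1_comp_πM]
    _ = H.map incl1 ≫ H.map (πM (ModuleCat.of R R)) ≫ eApp e hcent hsm (ModuleCat.of R R) := by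
        rw [H.map_comp, Category.assoc]
    _ = H.map incl1 ≫ eFree e _ ≫ H.map (πM (ModuleCat.of R R)) := by rw [h1]
    _ = (H.map incl1 ≫ eFree e _) ≫ H.map (πM (ModuleCat.of R R)) := by rw [Category.assoc]
    _ = (e ≫ H.map incl1) ≫ H.map (πM (ModuleCat.of R R)) := by
        rw [incl1, eFree_fac e (↥(ModuleCat.of R R)) (oneR R)]
    _ = e ≫ H.map (incl1 ≫ πM (ModuleCat.of R R)) := by rw [Category.assoc, H.map_comp]
    _ = e ≫ H.map (𝟙 _) := by rw [incl1_comp_πM]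
    _ = e := by rw [H.map_id, Category.comp_id]

end build

lemma app_eq_of_app_R_eq (hsm : ∀ α : Type v, Small.{w₂} α) (η η' : H ⟶ H)
    (h : η.app (ModuleCat.of R R) = η'.app (ModuleCat.of R R)) : η = η' := by
  apply NatTrans.ext
  funext M
  haveI := hsm (↥M); haveI := hsm (KM M)
  have hfree : η.app (ModuleCat.of R ((↥M) →₀ R)) = η'.app (ModuleCat.of R ((↥M) →₀ R)) := by
    apply free_hom_ext (↥M)
    intro i
    rw [η.naturality (sl (↥M) i), η'.naturality (sl (↥M) i), h]
  apply Cofork.IsColimit.hom_ext (mapPresIsCokernel M)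
  show H.map (πM M) ≫ η.app M = H.map (πM M) ≫ η'.app M
  rw [η.naturality (πM M), η'.naturality (πM M), hfree]


section degenerate

def blockIn (ι : Type v) (β : ι) : ModuleCat.of R (ι →₀ R) ⟶ ModuleCat.of R ((ι × ι) →₀ R) :=
  ModuleCat.ofHom (Finsupp.lmapDomain R R (fun i => (β, i)))

def blockOut (ι : Type v) (β : ι) : ModuleCat.of R ((ι × ι) →₀ R) ⟶ ModuleCat.of R (ι →₀ R) :=
  ModuleCat.ofHom (Finsupp.lcomapDomain (fun i => (β, i))
    (fun a b hab => (Prod.mk.injEq _ _ _ _ ▸ hab).2))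

lemma blockIn_out_same (ι : Type v) (β : ι) : blockIn (R := R) ι β ≫ blockOut ι β = 𝟙 _ := by
  apply ModuleCat.hom_ext
  apply LinearMap.ext
  intro (x : ι →₀ R)
  have hinj : Function.Injective (fun i : ι => (β, i)) :=
    fun a b hab => (Prod.mk.injEq _ _ _ _ ▸ hab).2
  show Finsupp.comapDomain (fun i : ι => (β, i))
      (Finsupp.mapDomain (fun i : ι => (β, i)) x) _ = x
  refine Finsupp.ext fun i => ?_
  erw [Finsupp.comapDomain_apply, Finsupp.mapDomain_apply hinj]

lemma blockIn_out_ne (ι : Type v) (β γ : ι) (h : β ≠ γ) :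
    blockIn (R := R) ι β ≫ blockOut ι γ = 0 := by
  apply ModuleCat.hom_ext
  apply LinearMap.ext
  intro (x : ι →₀ R)
  show Finsupp.comapDomain (fun i : ι => (γ, i))
      (Finsupp.mapDomain (fun i : ι => (β, i)) x) _ = (0 : ι →₀ R)
  refine Finsupp.ext fun i => ?_
  erw [Finsupp.comapDomain_apply, Finsupp.mapDomain_notin_range]
  · simp
  · rintro ⟨a, ha⟩
    exact absurd (congrArg Prod.fst ha) h

lemma id_eq_zero_of_not_small (ι : Type v) (h : ¬ Small.{w₂} ι) :
    𝟙 (H.obj (ModuleCat.of R (ι →₀ R))) = 0 := by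
  have hni : ¬ Function.Injective
      (fun β : ι => (H.map (blockIn (R := R) ι β), H.map (blockOut (R := R) ι β))) := by
    intro hinj
    exact h (small_of_injective hinj)
  rw [Function.not_injective_iff] at hni
  obtain ⟨β, γ, heq, hne⟩ := hni
  have h1 : H.map (blockIn (R := R) ι β) = H.map (blockIn (R := R) ι γ) :=
    congrArg Prod.fst heq
  calc 𝟙 (H.obj (ModuleCat.of R (ι →₀ R)))
      = H.map (𝟙 _) := (H.map_id _).symm
    _ = H.map (blockIn (R := R) ι β ≫ blockOut ι β) := by rw [blockIn_out_same]
    _ = H.map (blockIn (R := R) ι β) ≫ H.map (blockOut ι β) := H.map_comp _ _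
    _ = H.map (blockIn (R := R) ι γ) ≫ H.map (blockOut ι β) := by rw [h1]
    _ = H.map (blockIn (R := R) ι γ ≫ blockOut ι β) := (H.map_comp _ _).symm
    _ = H.map 0 := by rw [blockIn_out_ne ι γ β (Ne.symm hne)]
    _ = 0 := H.map_zero _ _

lemma id_eq_zero_of_exists_not_small (ι₀ : Type v) (h : ¬ Small.{w₂} ι₀)
    (M : ModuleCat.{v} R) : 𝟙 (H.obj M) = 0 := by
  set ι : Type v := ↥M ⊕ ι₀ with hι
  have hbig : ¬ Small.{w₂} ι := fun hs => h (small_of_injective (Sum.inr_injective (α := ↥M)))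
  have hfree : 𝟙 (H.obj (ModuleCat.of R (ι →₀ R))) = 0 := id_eq_zero_of_not_small (H := H) ι hbig
  -- epi onto M
  set q : ModuleCat.of R (ι →₀ R) ⟶ M :=
    ModuleCat.ofHom (Finsupp.linearCombination R (Sum.elim _root_.id fun _ => (0 : M))) with hq
  have hsurj : Function.Surjective q := by
    apply Finsupp.linearCombination_surjective
    intro m
    exact ⟨Sum.inl m, rfl⟩
  haveI : Epi q := (ModuleCat.epi_iff_surjective q).2 hsurj
  haveI : H.PreservesEpimorphisms := by
    haveI := preservesColimitsOfSize_shrink.{0,w₂,0,w₂} H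
    infer_instance
  haveI : Epi (H.map q) := H.map_epi q
  have hq0 : H.map q = 0 := by rw [← Category.id_comp (H.map q), hfree, zero_comp]
  exact (cancel_epi (H.map q)).1 (show H.map q ≫ 𝟙 (H.obj M) = H.map q ≫ 0 by
    rw [hq0, zero_comp, comp_zero])
end degenerate
end FunctorEndAux

/-- for a `k`-linear colimit-preserving functor `H : ModuleCat R ⥤ 𝓑` into an
abelian `k`-linear category, the specialization map from natural endomorphisms of `H` to
`End_𝓑(H(R))` is injective, with image the centralizer of the image of
`End_R(R) → End_𝓑(H(R))`. -/
theorem functor_endomorphisms_eq_centralizer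
    (B : Type w) [Category.{w₂} B] [Abelian B] [CategoryTheory.Linear k B]
    (H : ModuleCat.{v} R ⥤ B) [H.Additive] [Functor.Linear k H]
    [Limits.PreservesColimits H] :
    Function.Injective (fun η : H ⟶ H => η.app (ModuleCat.of R R)) ∧
    Set.range (fun η : H ⟶ H => η.app (ModuleCat.of R R))
      = {e : End (H.obj (ModuleCat.of R R)) |
          ∀ s : End (ModuleCat.of R R), H.map s ≫ e = e ≫ H.map s} := by
  classical
  rcases Classical.em (∀ α : Type v, Small.{w₂} α) with hsm | hbig
  · refine ⟨?_, ?_⟩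
    · intro η η' h
      exact FunctorEndAux.app_eq_of_app_R_eq hsm η η' h
    · ext e
      simp only [Set.mem_range, Set.mem_setOf_eq]
      constructor
      · rintro ⟨η, rfl⟩ s
        exact η.naturality s
      · intro hcent
        exact ⟨FunctorEndAux.eNat e hcent hsm, FunctorEndAux.eNat_app_R e hcent hsm⟩
  · obtain ⟨ι₀, hι₀⟩ := not_forall.mp hbig
    have hzero : ∀ M' : ModuleCat.{v} R, 𝟙 (H.obj M') = 0 :=
      FunctorEndAux.id_eq_zero_of_exists_not_small (H := H) ι₀ hι₀
    have hEq : ∀ (M' N' : ModuleCat.{v} R) (u v' : H.obj M' ⟶ H.obj N'), u = v' := by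
      intro M' N' u v'
      calc u = u ≫ 𝟙 _ := (Category.comp_id u).symm
        _ = u ≫ 0 := by rw [hzero]
        _ = 0 := Limits.comp_zero
        _ = v' ≫ 0 := Limits.comp_zero.symm
        _ = v' ≫ 𝟙 _ := by rw [hzero]
        _ = v' := Category.comp_id v'
    refine ⟨?_, ?_⟩
    · intro η η' _
      apply NatTrans.ext
      funext M'
      exact hEq M' M' _ _
    · ext e
      simp only [Set.mem_range, Set.mem_setOf_eq]
      constructor
      · rintro ⟨η, rfl⟩ s
        exact hEq _ _ _ _
      · intro _
        exact ⟨𝟙 H, hEq _ _ _ _⟩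


end
end

section
/- Let k be a commutative ring, A : SimplexCategory ⥤ AlgebraCat k a cosimplicial k-algebra, and n a natural number. Suppose that for every m < n, every i with 0 ≤ i ≤ m, and all elements a, b of the algebra A[m], the elements A(δ_i)(a) and A(δ_{i+1})(b) commute in A[m+1], where δ_i : [m] → [m+1] denotes the i-th coface map of the simplex category. Then the algebra A[m] is commutative for every m < n. -/
open CategoryTheory

/-- If a cosimplicial `k`-algebra `A` is such that for all `m < n` and all
`0 ≤ i ≤ m`, the images of the cofaces `δ i` and `δ (i+1)` from `A[m]` to `A[m+1]` commute
elementwise, then `A[m]` is commutative for all `m < n`. -/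
theorem cosimplicial_algebra_commutative_of_adjacent_cofaces_commute
    (k : Type*) [CommRing k] (A : SimplexCategory ⥤ AlgCat k) (n : ℕ)
    (h : ∀ (m : ℕ), m < n → ∀ (i : ℕ) (hi : i ≤ m)
      (a b : A.obj (SimplexCategory.mk m)),
        Commute
          ((A.map (SimplexCategory.δ (⟨i, by omega⟩ : Fin (m + 2)))) a)
          ((A.map (SimplexCategory.δ (⟨i + 1, by omega⟩ : Fin (m + 2)))) b)) :
    ∀ (m : ℕ), m < n → ∀ (a b : A.obj (SimplexCategory.mk m)), Commute a b := by
  intro m hm a b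
  have h0 := h m hm 0 (Nat.zero_le m) a b
  have h0' := h m hm 0 (Nat.zero_le m) b a
  set f := A.map (SimplexCategory.δ (⟨0, by omega⟩ : Fin (m + 2))) with hf
  set g := A.map (SimplexCategory.δ (⟨1, by omega⟩ : Fin (m + 2))) with hg
  set s := A.map (SimplexCategory.σ (⟨0, by omega⟩ : Fin (m + 1))) with hs
  have key : ∀ x : A.obj (SimplexCategory.mk m), s (f x) = x := by
    intro x
    have : f ≫ s = 𝟙 _ := by
      rw [hf, hs, ← A.map_comp, ← A.map_id]
      congr 1
    have := congrArg (fun φ => AlgCat.Hom.hom φ x) this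
    simpa [AlgCat.hom_comp, AlgCat.hom_id] using this
  have key' : ∀ x : A.obj (SimplexCategory.mk m), s (g x) = x := by
    intro x
    have : g ≫ s = 𝟙 _ := by
      rw [hg, hs, ← A.map_comp, ← A.map_id]
      congr 1
      exact SimplexCategory.δ_comp_σ_succ' rfl
    have := congrArg (fun φ => AlgCat.Hom.hom φ x) this
    simpa [AlgCat.hom_comp, AlgCat.hom_id] using this
  calc a * b = s (f a) * s (g b) := by rw [key, key']
    _ = s (f a * g b) := (map_mul s.hom _ _).symm
    _ = s (g b * f a) := by rw [h0]
    _ = s (g b) * s (f a) := map_mul s.hom _ _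
    _ = b * a := by rw [key, key']
end

section
/- Let k be a commutative ring, H a k-algebra, and n ≥ 1. Let F_n : (ModuleCat H)^n ⥤ ModuleCat k be the functor sending an n-tuple (M₁,…,M_n) of left H-modules to the k-module M₁ ⊗_k ⋯ ⊗_k M_n (left-bracketed). Then the map from H^{⊗_k n} to the algebra of natural endomorphisms of F_n, sending x ∈ H^{⊗n} to the natural transformation whose component at (M₁,…,M_n) is the action of x (where h₁ ⊗ ⋯ ⊗ h_n acts by m₁ ⊗ ⋯ ⊗ m_n ↦ h₁m₁ ⊗ ⋯ ⊗ h_nm_n), is a k-algebra isomorphism; its inverse sends a natural endomorphism to the value of its component at (H,…,H) on the element 1 ⊗ ⋯ ⊗ 1. -/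
open scoped TensorProduct

noncomputable section

universe u

variable (k : Type u) [CommRing k] (H : Type u) [Ring H] [Algebra k H]

/-- A bundled left `H`-module (with its induced `k`-module structure). -/
structure HModule where
  X : Type u
  [grp : AddCommGroup X]
  [modk : Module k X]
  [modH : Module H X]
  [tower : IsScalarTower k H X]

attribute [instance] HModule.grp HModule.modk HModule.modH HModule.tower

variable {k H} in
/-- The value of the functor `F_n`: the `n`-fold tensor power over `k` of the underlying
`k`-modules of a family of `H`-modules. -/
abbrev Tpow {n : ℕ} (M : Fin n → HModule k H) : Type u := ⨂[k] i, (M i).X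

variable {k H} in
/-- The map induced on tensor powers by a family of `H`-linear maps. -/
abbrev TpowMap {n : ℕ} {M N : Fin n → HModule k H} (f : ∀ i, (M i).X →ₗ[H] (N i).X) :
    Tpow M →ₗ[k] Tpow N :=
  PiTensorProduct.map fun i => (f i).restrictScalars k

/-- The `k`-algebra of natural endomorphisms of the functor
`(M₁,…,M_n) ↦ M₁ ⊗_k ⋯ ⊗_k M_n` from `n`-tuples of `H`-modules to `k`-modules:
families of `k`-linear endomorphisms natural with respect to all tuples of `H`-linear maps. -/
def NatEnd (n : ℕ) : Subalgebra k (∀ M : Fin n → HModule k H, Module.End k (Tpow M)) where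
  carrier := {η | ∀ (M N : Fin n → HModule k H) (f : ∀ i, (M i).X →ₗ[H] (N i).X),
    TpowMap f ∘ₗ η M = η N ∘ₗ TpowMap f}
  mul_mem' := by
    intro a b ha hb M N f
    refine LinearMap.ext fun x => ?_
    have h1 := LinearMap.congr_fun (ha M N f) ((b M) x)
    have h2 := LinearMap.congr_fun (hb M N f) x
    simp only [LinearMap.comp_apply] at h1 h2 ⊢
    simp only [Pi.mul_apply, Module.End.mul_apply]
    rw [h1, h2]
  one_mem' := by intro M N f; rfl
  add_mem' := by
    intro a b ha hb M N f
    refine LinearMap.ext fun x => ?_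
    have h1 := LinearMap.congr_fun (ha M N f) x
    have h2 := LinearMap.congr_fun (hb M N f) x
    simp only [LinearMap.comp_apply] at h1 h2 ⊢
    simp only [Pi.add_apply, LinearMap.add_apply, map_add]
    rw [h1, h2]
  zero_mem' := by
    intro M N f
    refine LinearMap.ext fun x => ?_
    simp
  algebraMap_mem' := by
    intro c M N f
    refine LinearMap.ext fun x => ?_
    simp only [LinearMap.comp_apply, Pi.algebraMap_apply, Module.algebraMap_end_apply,
      map_smul]

/-- The `H`-module `H` itself. -/
def HH : HModule k H := ⟨H⟩

section Aux

variable {n : ℕ}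

/-- The multilinear map sending `h : Fin n → H` to the family of endomorphisms
given by the action of `h` on each tensor power. -/
def actMultilinear (n : ℕ) :
    MultilinearMap k (fun _ : Fin n => H)
      (∀ M : Fin n → HModule k H, Module.End k (Tpow M)) :=
  MultilinearMap.pi fun M =>
    (PiTensorProduct.mapMultilinear k (fun i => (M i).X) (fun i => (M i).X)).compLinearMap
      fun i => (Algebra.lsmul k k (M i).X : H →ₐ[k] Module.End k (M i).X).toLinearMap

lemma actMultilinear_apply (h : Fin n → H) (M : Fin n → HModule k H)
    (m : ∀ i, (M i).X) :
    actMultilinear k H n h M (PiTensorProduct.tprod k m)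
      = PiTensorProduct.tprod k fun i => h i • m i := by
  simp [actMultilinear, PiTensorProduct.map_tprod]

lemma actMultilinear_one : actMultilinear k H n 1 = 1 := by
  funext M
  refine PiTensorProduct.ext (MultilinearMap.ext fun m => ?_)
  simp only [LinearMap.compMultilinearMap_apply]
  rw [actMultilinear_apply]
  simp

lemma actMultilinear_mul (x y : Fin n → H) :
    actMultilinear k H n (x * y) = actMultilinear k H n x * actMultilinear k H n y := by
  funext M
  refine PiTensorProduct.ext (MultilinearMap.ext fun m => ?_)
  simp only [LinearMap.compMultilinearMap_apply, Pi.mul_apply, Module.End.mul_apply]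
  rw [actMultilinear_apply, actMultilinear_apply, actMultilinear_apply]
  simp [mul_smul]

/-- The algebra homomorphism from `H^{⊗n}` to the full endomorphism algebra. -/
def actHom (n : ℕ) :
    (⨂[k] (_ : Fin n), H) →ₐ[k] (∀ M : Fin n → HModule k H, Module.End k (Tpow M)) :=
  PiTensorProduct.liftAlgHom (actMultilinear k H n) (actMultilinear_one k H)
    (actMultilinear_mul k H)

lemma actHom_tprod (h : Fin n → H) (M : Fin n → HModule k H) (m : ∀ i, (M i).X) :
    actHom k H n (PiTensorProduct.tprod k h) M (PiTensorProduct.tprod k m)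
      = PiTensorProduct.tprod k fun i => h i • m i := by
  rw [show actHom k H n (PiTensorProduct.tprod k h) = actMultilinear k H n h by
    rw [actHom, PiTensorProduct.liftAlgHom_apply, PiTensorProduct.lift.tprod]]
  exact actMultilinear_apply k H h M m

lemma actHom_mem (x : ⨂[k] (_ : Fin n), H) : actHom k H n x ∈ NatEnd k H n := by
  induction x using PiTensorProduct.induction_on with
  | smul_tprod r h =>
    rw [map_smul]
    refine Subalgebra.smul_mem _ ?_ r
    intro M N f
    refine PiTensorProduct.ext (MultilinearMap.ext fun m => ?_)
    simp only [LinearMap.compMultilinearMap_apply, LinearMap.comp_apply]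
    rw [actHom_tprod, PiTensorProduct.map_tprod, PiTensorProduct.map_tprod, actHom_tprod]
    congr 1
    funext i
    simpa using (f i).map_smul (h i) (m i)
  | add x y hx hy => rw [map_add]; exact add_mem hx hy

/-- `actHom` corestricted to natural endomorphisms. -/
def actHom' (n : ℕ) : (⨂[k] (_ : Fin n), H) →ₐ[k] NatEnd k H n :=
  (actHom k H n).codRestrict (NatEnd k H n) (actHom_mem k H)

lemma actHom'_val (x : ⨂[k] (_ : Fin n), H) :
    (actHom' k H n x).val = actHom k H n x := rfl

lemma eval_actHom (x : ⨂[k] (_ : Fin n), H) :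
    actHom k H n x (fun _ => HH k H) (PiTensorProduct.tprod k fun _ => (1 : H)) = x := by
  induction x using PiTensorProduct.induction_on with
  | smul_tprod r h =>
    rw [map_smul]
    simp only [Pi.smul_apply, LinearMap.smul_apply]
    erw [actHom_tprod]
    exact congrArg (fun z => r • z)
      (congrArg (PiTensorProduct.tprod k) (funext fun i => by exact mul_one (h i)))
  | add x y hx hy => rw [map_add]; simp only [Pi.add_apply, LinearMap.add_apply, hx, hy]; rfl

lemma actHom_eq_tpowMap {M : Fin n → HModule k H} (m : ∀ i, (M i).X)
    (x : ⨂[k] (_ : Fin n), H) :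
    actHom k H n x M (PiTensorProduct.tprod k m)
      = TpowMap (M := fun _ => HH k H) (N := M)
          (fun i => LinearMap.toSpanSingleton H (M i).X (m i)) x := by
  induction x using PiTensorProduct.induction_on with
  | smul_tprod r h =>
    rw [map_smul]; erw [map_smul]
    simp only [Pi.smul_apply, LinearMap.smul_apply]
    rw [actHom_tprod]
    erw [PiTensorProduct.map_tprod]
    rfl
  | add x y hx hy =>
    rw [map_add]; erw [map_add]
    simp only [Pi.add_apply, LinearMap.add_apply, hx, hy]

lemma actHom'_surj (η : NatEnd k H n) :
    actHom' k H n (η.val (fun _ => HH k H) (PiTensorProduct.tprod k fun _ => (1 : H))) = η := by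
  set x := η.val (fun _ => HH k H) (PiTensorProduct.tprod k fun _ => (1 : H)) with hx
  refine Subtype.ext ?_
  erw [actHom'_val]
  funext M
  refine PiTensorProduct.ext (MultilinearMap.ext fun m => ?_)
  simp only [LinearMap.compMultilinearMap_apply]
  have key := actHom_eq_tpowMap k H m x
  have nat := η.2 (fun _ => HH k H) M (fun i => LinearMap.toSpanSingleton H (M i).X (m i))
  have nat1 := LinearMap.congr_fun nat (PiTensorProduct.tprod k fun _ => (1 : H))
  simp only [LinearMap.comp_apply] at nat1
  have h1 : TpowMap (M := fun _ => HH k H) (N := M)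
      (fun i => LinearMap.toSpanSingleton H (M i).X (m i))
      (PiTensorProduct.tprod k fun _ => (1 : H)) = PiTensorProduct.tprod k m := by
    erw [PiTensorProduct.map_tprod]
    congr 1
    funext i
    exact one_smul H (m i)
  rw [h1] at nat1
  rw [key, ← nat1, ← hx]

end Aux

/-- the map sending `x ∈ H^{⊗n}` to the natural endomorphism of the functor
`(M₁,…,M_n) ↦ M₁ ⊗_k ⋯ ⊗_k M_n` given by the action of `x` is a `k`-algebra isomorphism
from `H^{⊗n}` onto the algebra of natural endomorphisms; its inverse sends a natural
endomorphism to the value of its component at `(H,…,H)` on `1 ⊗ ⋯ ⊗ 1`. -/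
theorem tensor_power_endomorphisms_of_forgetful_functor
    (n : ℕ) (hn : 1 ≤ n) :
    ∃ iso : (⨂[k] (_ : Fin n), H) ≃ₐ[k] NatEnd k H n,
      (∀ (h : Fin n → H) (M : Fin n → HModule k H) (m : ∀ i, (M i).X),
        ((iso (PiTensorProduct.tprod k h)).val M) (PiTensorProduct.tprod k m)
          = PiTensorProduct.tprod k fun i => h i • m i) ∧
      (∀ η : NatEnd k H n,
        iso.symm η
          = (η.val fun _ => HH k H) (PiTensorProduct.tprod k fun _ => (1 : H))) := by
  have hbij : Function.Bijective (actHom' k H n) := by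
    constructor
    · intro x y hxy
      have := congrArg (fun z : NatEnd k H n =>
        z.val (fun _ => HH k H) (PiTensorProduct.tprod k fun _ => (1 : H))) hxy
      simp only [actHom'_val, eval_actHom] at this; exact this
    · intro η
      exact ⟨_, actHom'_surj k H η⟩
  refine ⟨AlgEquiv.ofBijective (actHom' k H n) hbij, ?_, ?_⟩
  · intro h M m
    rw [show ((AlgEquiv.ofBijective (actHom' k H n) hbij) (PiTensorProduct.tprod k h)).val
        = actHom k H n (PiTensorProduct.tprod k h) from rfl]
    exact actHom_tprod k H h M m
  · intro η
    erw [AlgEquiv.symm_apply_eq]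
    exact (actHom'_surj k H η).symm

end
end

section
/- Let k be a field and G a group. The map from G to the group of monoidal natural automorphisms of the forgetful functor Rep k G ⥤ ModuleCat k, sending g ∈ G to the natural automorphism whose component at a representation (V, ρ) is the linear automorphism ρ(g) of V, is a group isomorphism. -/
open CategoryTheory MonoidalCategory

noncomputable section

universe u

namespace TannakaAux

variable (k : Type u) [Field k] (G : Type u) [Group G]

lemma ρ_comp (V : Action (ModuleCat.{u} k) (MonCat.of G)) (g h : G) :
    (Action.ρ V g ≫ Action.ρ V h) = Action.ρ V (h * g) := by
  rw [map_mul]; rfl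

/-- The natural transformation of the forgetful functor with component `V.ρ g`. -/
@[simps]
def ρNat (g : G) :
    (Action.forget (ModuleCat.{u} k) (MonCat.of G)) ⟶
      (Action.forget (ModuleCat.{u} k) (MonCat.of G)) where
  app V := V.ρ g
  naturality _ _ f := (f.comm g).symm

instance (g : G) : NatTrans.IsMonoidal (ρNat k G g) where
  unit := by ext x; rfl
  tensor X Y := by ext x; rfl

/-- The monoidal natural automorphism attached to `g`. -/
def τ (g : G) :
    Aut (LaxMonoidalFunctor.of (Action.forget (ModuleCat.{u} k) (MonCat.of G))) where
  hom := ⟨ρNat k G g, { unit := by ext x; rfl, tensor := fun X Y => by ext x; rfl }⟩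
  inv := ⟨ρNat k G g⁻¹, { unit := by ext x; rfl, tensor := fun X Y => by ext x; rfl }⟩
  hom_inv_id := by
    apply LaxMonoidalFunctor.hom_ext
    ext V : 3
    change (V.ρ g ≫ V.ρ g⁻¹).hom = LinearMap.id
    rw [ρ_comp, inv_mul_cancel, Action.ρ_one]; rfl
  inv_hom_id := by
    apply LaxMonoidalFunctor.hom_ext
    ext V : 3
    change (V.ρ g⁻¹ ≫ V.ρ g).hom = LinearMap.id
    rw [ρ_comp, mul_inv_cancel, Action.ρ_one]; rfl

@[simp]
lemma τ_app (g : G) (V : Action (ModuleCat.{u} k) (MonCat.of G)) :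
    (τ k G g).hom.hom.app V = V.ρ g := rfl

/-- `τ` as a monoid hom. -/
def τHom : G →* Aut (LaxMonoidalFunctor.of (Action.forget (ModuleCat.{u} k) (MonCat.of G))) where
  toFun := τ k G
  map_one' := by
    apply Iso.ext
    apply LaxMonoidalFunctor.hom_ext
    apply NatTrans.ext
    funext V
    exact Action.ρ_one V
  map_mul' g h := by
    apply Iso.ext
    apply LaxMonoidalFunctor.hom_ext
    apply NatTrans.ext
    funext V
    change Action.ρ V (g * h) = Action.ρ V h ≫ Action.ρ V g
    rw [ρ_comp]

/-- The left regular representation on `G →₀ k`. -/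
def regRep : G →* (G →₀ k) →ₗ[k] (G →₀ k) where
  toFun g := Finsupp.lmapDomain k k (g * ·)
  map_one' := by ext; simp
  map_mul' x y := by ext; simp [mul_assoc]

lemma regRep_single (g t : G) (c : k) :
    regRep k G g (Finsupp.single t c) = Finsupp.single (g * t) c := by
  simp [regRep]

/-- The left regular representation as an object of `Action`. -/
def R : Action (ModuleCat.{u} k) (MonCat.of G) :=
  ⟨ModuleCat.of k (G →₀ k),
    (ModuleCat.endRingEquiv (ModuleCat.of k (G →₀ k))).symm.toMonoidHom.comp (regRep k G)⟩

lemma R_ρ_single (g t : G) (c : k) :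
    ((R k G).ρ g).hom (Finsupp.single t c) = Finsupp.single (g * t) c :=
  regRep_single k G g t c

/-- The linear map underlying `regHom`. -/
def regLin (V : Action (ModuleCat.{u} k) (MonCat.of G)) (v : V.V) : (G →₀ k) →ₗ[k] V.V :=
  Finsupp.lift V.V k G fun t => (V.ρ t).hom v

lemma regLin_single (V : Action (ModuleCat.{u} k) (MonCat.of G)) (v : V.V) (t : G) (c : k) :
    regLin k G V v (Finsupp.single t c) = c • (V.ρ t).hom v := by
  rw [regLin, Finsupp.lift_apply, Finsupp.sum_single_index (by simp)]

/-- The morphism from the regular representation sending `single 1 1` to `v`. -/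
def regHom (V : Action (ModuleCat.{u} k) (MonCat.of G)) (v : V.V) : R k G ⟶ V where
  hom := ModuleCat.ofHom (regLin k G V v)
  comm g := by
    apply ModuleCat.hom_ext
    apply Finsupp.lhom_ext
    intro t c
    change regLin k G V v (regRep k G g (Finsupp.single t c)) =
      (V.ρ g).hom (regLin k G V v (Finsupp.single t c))
    rw [regRep_single, regLin_single, regLin_single, map_smul, map_mul]
    rfl

lemma regHom_single (V : Action (ModuleCat.{u} k) (MonCat.of G)) (v : V.V) (t : G) (c : k) :
    (regHom k G V v).hom.hom (Finsupp.single t c) = c • (V.ρ t).hom v :=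
  regLin_single k G V v t c

lemma τHom_injective : Function.Injective (τHom k G) := by
  intro g h hgh
  have := congrArg (fun η => (η.hom.hom.app (R k G)).hom (Finsupp.single (1 : G) (1 : k)))
    hgh
  change regRep k G g (Finsupp.single 1 1) = regRep k G h (Finsupp.single 1 1) at this
  rw [regRep_single, regRep_single] at this
  simp only [mul_one] at this
  exact (Finsupp.single_left_inj one_ne_zero).mp this

/-- The linear map underlying `Δ`. -/
def ΔLin : (G →₀ k) →ₗ[k] TensorProduct k (G →₀ k) (G →₀ k) :=
  Finsupp.lift _ k G fun g => Finsupp.single g (1 : k) ⊗ₜ[k] Finsupp.single g (1 : k)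

lemma ΔLin_single (r : G) (c : k) :
    ΔLin k G (Finsupp.single r c) =
      c • (Finsupp.single r (1 : k) ⊗ₜ[k] Finsupp.single r (1 : k)) := by
  rw [ΔLin, Finsupp.lift_apply, Finsupp.sum_single_index (by simp)]

/-- Comultiplication on the left regular representation. -/
def Δ : R k G ⟶ R k G ⊗ R k G where
  hom := ModuleCat.ofHom (ΔLin k G)
  comm g := by
    apply ModuleCat.hom_ext
    apply Finsupp.lhom_ext
    intro t c
    change ΔLin k G (regRep k G g (Finsupp.single t c)) =
      TensorProduct.map (regRep k G g) (regRep k G g) (ΔLin k G (Finsupp.single t c))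
    rw [regRep_single, ΔLin_single, ΔLin_single, map_smul, TensorProduct.map_tmul]
    erw [regRep_single]

lemma Δ_single (r : G) (c : k) :
    (Δ k G).hom.hom (Finsupp.single r c) =
      c • (Finsupp.single r (1 : k) ⊗ₜ[k] Finsupp.single r (1 : k) :
        TensorProduct k (G →₀ k) (G →₀ k)) :=
  ΔLin_single k G r c

/-- Coefficient extraction functional on the tensor square. -/
def φc (s t : G) : TensorProduct k (G →₀ k) (G →₀ k) →ₗ[k] k :=
  TensorProduct.lift ((LinearMap.mul k k).compl₁₂
    (Finsupp.lapply s : (G →₀ k) →ₗ[k] k) (Finsupp.lapply t : (G →₀ k) →ₗ[k] k))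

lemma φc_tmul (s t : G) (x y : G →₀ k) : φc k G s t (x ⊗ₜ[k] y) = x s * y t := rfl

open scoped Classical in
lemma φc_comp_Δ (s t : G) (x : G →₀ k) :
    φc k G s t ((Δ k G).hom.hom x) = if s = t then x s else 0 := by
  have h : (φc k G s t).comp (ΔLin k G) =
      if s = t then (Finsupp.lapply s : (G →₀ k) →ₗ[k] k) else 0 := by
    apply Finsupp.lhom_ext
    intro r c
    rw [LinearMap.comp_apply, ΔLin_single]
    rw [map_smul, φc_tmul]
    by_cases hst : s = t
    · subst hst
      rw [if_pos rfl]
      by_cases hrs : r = s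
      · subst hrs; simp [Finsupp.single_apply]
      · simp [Finsupp.single_apply, hrs]
    · rw [if_neg hst]
      by_cases hrs : r = s
      · subst hrs; simp [Finsupp.single_apply, hst]
      · simp [Finsupp.single_apply, hrs]
  rw [show φc k G s t ((Δ k G).hom.hom x) =
    ((φc k G s t).comp (ΔLin k G)) x from rfl, h]
  split_ifs <;> rfl

lemma τHom_surjective : Function.Surjective (τHom k G) := by
  classical
  intro η
  set α := η.hom.hom with hα
  set u : G →₀ k :=
    (α.app (R k G)).hom (Finsupp.single (1 : G) (1 : k)) with hu
  -- monoidality: the component at R ⊗ R is the tensor square of the component at R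
  have htens : (α.app (R k G ⊗ R k G)).hom =
      TensorProduct.map (α.app (R k G)).hom (α.app (R k G)).hom := by
    have := η.hom.isMonoidal.tensor (R k G) (R k G)
    erw [Action.forget_μ, Category.id_comp, Category.comp_id] at this
    rw [this]; rfl
  -- naturality at Δ
  have hΔ : (Δ k G).hom.hom u =
      TensorProduct.map (α.app (R k G)).hom (α.app (R k G)).hom
        ((Δ k G).hom.hom (Finsupp.single (1 : G) (1 : k))) := by
    have h1 : (Δ k G).hom ≫ α.app (R k G ⊗ R k G) =
        α.app (R k G) ≫ (Δ k G).hom := α.naturality (Δ k G)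
    have h2 : (Δ k G).hom.hom ((α.app (R k G)).hom (Finsupp.single (1 : G) (1 : k))) =
        (α.app (R k G ⊗ R k G)).hom ((Δ k G).hom.hom (Finsupp.single (1 : G) (1 : k))) :=
      (congrArg (fun L => L.hom (Finsupp.single (1 : G) (1 : k))) h1).symm
    rw [htens] at h2
    exact h2
  have key : ∀ s t : G, u s * u t = if s = t then u s else 0 := by
    intro s t
    have := congrArg (φc k G s t) hΔ
    rw [φc_comp_Δ] at this
    rw [Δ_single, one_smul] at this
    rw [this]; rfl
  -- u is nonzero since α is an isomorphism
  have hu0 : u ≠ 0 := by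
    intro h
    have h3 : (η.inv.hom.app (R k G)).hom
        ((α.app (R k G)).hom (Finsupp.single (1 : G) (1 : k))) =
        Finsupp.single (1 : G) (1 : k) :=
      congrArg (fun m => (m.hom.app (R k G)).hom (Finsupp.single (1 : G) (1 : k))) η.hom_inv_id
    rw [← hu, h] at h3
    erw [map_zero] at h3
    exact one_ne_zero (Finsupp.single_eq_zero.mp h3.symm)
  obtain ⟨g, hg⟩ : ∃ g, u g ≠ 0 := by
    by_contra h
    push_neg at h
    exact hu0 (Finsupp.ext h)
  have hg1 : u g = 1 := by
    refine mul_left_cancel₀ hg ?_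
    rw [key g g, if_pos rfl, mul_one]
  have husingle : u = Finsupp.single g 1 := by
    ext t
    by_cases hgt : g = t
    · subst hgt; simp [hg1]
    · have := key g t
      rw [if_neg hgt, hg1, one_mul] at this
      simp [this, Finsupp.single_apply, hgt]
  refine ⟨g, ?_⟩
  apply Iso.ext
  apply LaxMonoidalFunctor.hom_ext
  apply NatTrans.ext
  funext V
  apply ModuleCat.hom_ext
  apply LinearMap.ext
  change ∀ v : V.V, (V.ρ g).hom v = (α.app V).hom v
  intro v
  have h1 : (regHom k G V v).hom ≫ α.app V =
      α.app (R k G) ≫ (regHom k G V v).hom :=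
    α.naturality (regHom k G V v)
  have h3 : (α.app V).hom ((regHom k G V v).hom.hom (Finsupp.single (1 : G) (1 : k))) =
      (regHom k G V v).hom.hom
        ((α.app (R k G)).hom (Finsupp.single (1 : G) (1 : k))) :=
    congrArg (fun L => L.hom (Finsupp.single (1 : G) (1 : k))) h1
  rw [← hu, husingle, regHom_single, regHom_single, one_smul, one_smul, Action.ρ_one] at h3
  exact h3.symm

theorem group_iso_monoidal_automorphisms_of_forget' :
    ∃ φ : G ≃* Aut (LaxMonoidalFunctor.of (Action.forget (ModuleCat.{u} k) (MonCat.of G))),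
      ∀ (g : G) (V : Action (ModuleCat.{u} k) (MonCat.of G)), (φ g).hom.hom.app V = V.ρ g := by
  exact ⟨MulEquiv.ofBijective (τHom k G) ⟨τHom_injective k G, τHom_surjective k G⟩,
    fun g V => rfl⟩

end TannakaAux

/-- for a field `k` and a group `G`, the map sending `g ∈ G` to the monoidal
natural automorphism of the forgetful functor `Rep k G ⥤ ModuleCat k` whose component at a
representation `(V, ρ)` is `ρ(g)`, is a group isomorphism onto the group of monoidal natural
automorphisms of the forgetful functor. -/
theorem group_iso_monoidal_automorphisms_of_forget
    (k : Type u) [Field k] (G : Type u) [Group G] :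
    ∃ φ : G ≃* Aut (LaxMonoidalFunctor.of (Action.forget (ModuleCat.{u} k) (MonCat.of G))),
      ∀ (g : G) (V : Action (ModuleCat.{u} k) (MonCat.of G)), (φ g).hom.hom.app V = V.ρ g := by
  exact TannakaAux.group_iso_monoidal_automorphisms_of_forget' k G

end
end
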